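/- Let K be a compact metric space, A ⊆ K a closed subset, G an Abelian group, and α an open cover of K. If for some q ≥ 0 the natural map H^q(N(α), N(α|_A); G) → Ȟ^q(K, A; G) from the relative cohomology of the nerve pair into the Čech cohomology of the pair (K, A) is nonzero, then D(α) ≥ q. -/

import Mathlib

open Filter Set
open scoped ENNReal

namespace MeanDimPaper

variable {X : Type*} [TopologicalSpace X]

/-- `α` is an open cover of `X`. -/
def IsOpenCover (α : Set (Set X)) : Prop :=
  (∀ U ∈ α, IsOpen U) ∧ ⋃₀ α = Set.univ

/-- The order of a cover `α`: the maximum `n ≥ 0` such that there exist `n + 1`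
pairwise distinct members of `α` with nonempty common intersection. -/
noncomputable def ord (α : Set (Set X)) : ℕ∞ :=
  ⨆ n ∈ {n : ℕ | ∃ f : Fin (n + 1) → Set X,
      Function.Injective f ∧ (∀ i, f i ∈ α) ∧ (⋂ i, f i).Nonempty}, (n : ℕ∞)

/-- `β` refines `α`: every member of `β` is contained in some member of `α`. -/
def Refines (β α : Set (Set X)) : Prop := ∀ V ∈ β, ∃ U ∈ α, V ⊆ U

/-- `D(α)`: the minimum of `ord β` over open covers `β` refining `α`. -/
noncomputable def covD (α : Set (Set X)) : ℕ∞ :=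
  ⨅ β ∈ {β : Set (Set X) | IsOpenCover β ∧ Refines β α}, ord β

/-- Topological (covering) dimension: the supremum of `D(α)` over open covers `α`. -/
noncomputable def topDim (X : Type*) [TopologicalSpace X] : ℕ∞ :=
  ⨆ α ∈ {α : Set (Set X) | IsOpenCover α}, covD α

/-- Diameter of a set with respect to a distance function `d`. -/
noncomputable def diamD (d : X → X → ℝ) (U : Set X) : ℝ :=
  sSup {r | ∃ x ∈ U, ∃ y ∈ U, r = d x y}

/-- Mesh of a cover: the supremum of the diameters of its members. -/
noncomputable def mesh (d : X → X → ℝ) (α : Set (Set X)) : ℝ :=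
  sSup (diamD d '' α)

/-- `widim_ε(X, d)`: the minimum of `D(α)` over open covers `α` with `mesh(α, d) < ε`. -/
noncomputable def widim (ε : ℝ) (d : X → X → ℝ) : ℕ∞ :=
  ⨅ α ∈ {α : Set (Set X) | IsOpenCover α ∧ mesh d α < ε}, covD α

/-- `d` is a metric on `X` compatible with the topology of `X`. -/
structure IsCompatMetric {X : Type*} [TopologicalSpace X] (d : X → X → ℝ) : Prop where
  refl : ∀ x, d x x = 0
  eq_of : ∀ x y, d x y = 0 → x = y
  symm : ∀ x y, d x y = d y x
  triangle : ∀ x y z, d x z ≤ d x y + d y z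
  isOpen_iff : ∀ U : Set X, IsOpen U ↔ ∀ x ∈ U, ∃ ε > 0, ∀ y, d x y < ε → y ∈ U

/-- The dynamical distance `d_n(x, y) = max_{0 ≤ i < n} d(Tⁱ x, Tⁱ y)`. -/
noncomputable def dynDist (d : X → X → ℝ) (T : X → X) (n : ℕ) (x y : X) : ℝ :=
  sSup {r | ∃ i < n, r = d (T^[i] x) (T^[i] y)}

/-- Mean dimension `mdim(X, T)` computed with the metric `d`:
`lim_{ε → 0} lim_{n → ∞} widim_ε(X, d_n) / n`.  The inner limit exists (by
subadditivity of `n ↦ widim_ε(X, d_n)`) so it coincides with the liminf, and the inner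
quantity is monotone as `ε` decreases, so the limit as `ε → 0` is the supremum over
`ε > 0`. -/
noncomputable def mdim (T : X → X) (d : X → X → ℝ) : ℝ≥0∞ :=
  ⨆ (ε : ℝ) (_ : 0 < ε),
    Filter.liminf (fun n : ℕ => (widim ε (dynDist d T n) : ℝ≥0∞) / (n : ℝ≥0∞)) Filter.atTop

/-- The full shift `σ` on the alphabet `K`: `σ((xₙ)ₙ) = (xₙ₊₁)ₙ`. -/
def shift (K : Type*) : (ℤ → K) → ℤ → K := fun x n => x (n + 1)

variable {K : Type*} [TopologicalSpace K]

/-- An ordered `q`-simplex of the nerve complex `N(α)`: a `(q+1)`-tuple of members of `α`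
with nonempty common intersection. -/
def IsNerveSimplex (α : Set (Set K)) {q : ℕ} (f : Fin (q + 1) → Set K) : Prop :=
  (∀ i, f i ∈ α) ∧ (⋂ i, f i).Nonempty

/-- The type of ordered `q`-simplices of the nerve `N(α)`. -/
def NerveSimplex (α : Set (Set K)) (q : ℕ) : Type _ :=
  {f : Fin (q + 1) → Set K // IsNerveSimplex α f}

/-- The `i`-th face of a `(q+1)`-simplex of the nerve. -/
def face {α : Set (Set K)} {q : ℕ} (g : NerveSimplex α (q + 1)) (i : Fin (q + 2)) :
    NerveSimplex α q :=
  ⟨g.1 ∘ i.succAbove, ⟨fun j => g.2.1 _, by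
    obtain ⟨x, hx⟩ := g.2.2
    exact ⟨x, Set.mem_iInter.2 fun j => Set.mem_iInter.1 hx _⟩⟩⟩

/-- A simplex of `N(α)` belongs to the subcomplex `N(α|_A)` iff the common intersection
of its members meets `A`. -/
def InSubNerve (A : Set K) {α : Set (Set K)} {q : ℕ} (f : NerveSimplex α q) : Prop :=
  ((⋂ i, f.1 i) ∩ A).Nonempty

/-- A relative cochain of the pair `(N(α), N(α|_A))`: a `G`-valued simplicial cochain on
`N(α)` vanishing on the subcomplex `N(α|_A)`. -/
def IsRelCochain (A : Set K) {α : Set (Set K)} {q : ℕ} {G : Type*} [AddCommGroup G]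
    (c : NerveSimplex α q → G) : Prop :=
  ∀ f, InSubNerve A f → c f = 0

/-- The simplicial coboundary operator. -/
def cob {α : Set (Set K)} {q : ℕ} {G : Type*} [AddCommGroup G]
    (c : NerveSimplex α q → G) (g : NerveSimplex α (q + 1)) : G :=
  ∑ i : Fin (q + 2), (-1 : ℤ) ^ (i : ℕ) • c (face g i)

/-- A relative `q`-cocycle of the pair `(N(α), N(α|_A))` with coefficients in `G`. -/
def IsRelCocycle (A : Set K) {α : Set (Set K)} {q : ℕ} {G : Type*} [AddCommGroup G]
    (c : NerveSimplex α q → G) : Prop :=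
  IsRelCochain A c ∧ ∀ g : NerveSimplex α (q + 1), cob c g = 0

/-- A relative `q`-coboundary of the pair `(N(α), N(α|_A))` with coefficients in `G`. -/
def IsRelCoboundary (A : Set K) {α : Set (Set K)} {G : Type*} [AddCommGroup G] :
    (q : ℕ) → (NerveSimplex α q → G) → Prop
  | 0, c => ∀ f, c f = 0
  | _ + 1, c => ∃ b, IsRelCochain A b ∧ ∀ g, cob b g = c g

/-- The simplicial map `N(β) → N(α)` induced by a choice `r` assigning to each member of
the refinement `β` a member of `α` containing it. -/
def simplexMap {α β : Set (Set K)} (r : Set K → Set K)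
    (hr : ∀ V ∈ β, V ⊆ r V ∧ r V ∈ α) {q : ℕ} (g : NerveSimplex β q) :
    NerveSimplex α q :=
  ⟨fun i => r (g.1 i), ⟨fun i => (hr _ (g.2.1 i)).2, by
    obtain ⟨x, hx⟩ := g.2.2
    exact ⟨x, Set.mem_iInter.2 fun i => (hr _ (g.2.1 i)).1 (Set.mem_iInter.1 hx i)⟩⟩⟩

/-- "The natural map `H^q(N(α), N(α|_A); G) → Ȟ^q(K, A; G)` is nonzero."
Since the Čech cohomology `Ȟ^q(K, A; G)` is the directed colimit of the cohomologies of
the nerve pairs over refinement, this map is nonzero iff some relative `q`-cocycle `c`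
on `(N(α), N(α|_A))` has the property that, for every open cover `β` refining `α`, the
pullback of `c` along any choice of induced simplicial map `N(β) → N(α)` is not a
relative coboundary (all such choices induce the same map on cohomology). -/
def NerveToCechNonzero (α : Set (Set K)) (A : Set K) (G : Type*) [AddCommGroup G]
    (q : ℕ) : Prop :=
  ∃ c : NerveSimplex α q → G, IsRelCocycle A c ∧
    ∀ β : Set (Set K), IsOpenCover β → Refines β α →
      ∀ (r : Set K → Set K) (hr : ∀ V ∈ β, V ⊆ r V ∧ r V ∈ α),
        ¬ IsRelCoboundary A q (fun g : NerveSimplex β q => c (simplexMap r hr g))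

/-- Cohomological dimension `dim_G K`: the supremum of all `q ≥ 0` such that
`Ȟ^q(K, A; G) ≠ 0` for some closed subset `A ⊆ K`.  An element of the colimit
`Ȟ^q(K, A; G)` is nonzero iff it is represented at some stage `α` by a cocycle class
with nonzero image in the colimit. -/
noncomputable def cohomDim (G : Type*) [AddCommGroup G] (K : Type*) [TopologicalSpace K] :
    ℕ∞ :=
  ⨆ q ∈ {q : ℕ | ∃ A : Set K, IsClosed A ∧
      ∃ α : Set (Set K), IsOpenCover α ∧ NerveToCechNonzero α A G q}, (q : ℕ∞)

set_option linter.unusedSectionVars false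

namespace ChainAux
open Finsupp
variable {V : Type*}

abbrev Tup (V : Type*) (n : ℕ) : Type _ := Fin (n + 1) → V
abbrev Ch (V : Type*) (n : ℕ) : Type _ := Tup V n →₀ ℤ

noncomputable def bdT {n : ℕ} (f : Tup V (n + 1)) : Ch V n :=
  ∑ i : Fin (n + 2), ((-1 : ℤ) ^ (i : ℕ)) • Finsupp.single (f ∘ i.succAbove) 1

noncomputable def bd {n : ℕ} : Ch V (n + 1) →ₗ[ℤ] Ch V n :=
  Finsupp.linearCombination ℤ bdT

@[simp] lemma bd_single {n : ℕ} (f : Tup V (n + 1)) :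
    bd (Finsupp.single f 1) = bdT f := by simp [bd]

noncomputable def cone {n : ℕ} (w : V) : Ch V n →ₗ[ℤ] Ch V (n + 1) :=
  Finsupp.linearCombination ℤ fun f => Finsupp.single (Fin.cons w f) 1

@[simp] lemma cone_single {n : ℕ} (w : V) (f : Tup V n) :
    cone w (Finsupp.single f 1) = Finsupp.single (Fin.cons w f) 1 := by simp [cone]

lemma cons_comp_succAbove_succ {n : ℕ} (w : V) (f : Tup V (n + 1)) (j : Fin (n + 2)) :
    (Fin.cons w f : Tup V (n + 2)) ∘ (Fin.succ j).succAbove = Fin.cons w (f ∘ j.succAbove) := by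
  funext k
  induction k using Fin.cases with
  | zero => simp
  | succ l => simp

lemma bd_cone_single {n : ℕ} (w : V) (f : Tup V (n + 1)) :
    bd (cone w (Finsupp.single f 1))
      = Finsupp.single f 1 - cone w (bd (Finsupp.single f 1)) := by
  rw [cone_single, bd_single, bd_single, bdT, Fin.sum_univ_succ]
  have h0 : (Fin.cons w f : Tup V (n + 2)) ∘ (0 : Fin (n + 3)).succAbove = f := by
    funext k; simp
  rw [h0]
  simp only [Fin.val_zero, pow_zero, one_smul, Fin.val_succ, cons_comp_succAbove_succ]
  rw [bdT, map_sum]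
  simp only [map_smul, cone_single]
  rw [sub_eq_add_neg, ← Finset.sum_neg_distrib]
  congr 1
  refine Finset.sum_congr rfl fun j _ => ?_
  rw [pow_succ]
  ring_nf
  module

lemma single_eq_smul_single {α : Type*} (f : α) (c : ℤ) :
    (Finsupp.single f c : α →₀ ℤ) = c • Finsupp.single f 1 := by
  simp [Finsupp.smul_single]

lemma bd_cone {n : ℕ} (w : V) (x : Ch V (n + 1)) :
    bd (cone w x) = x - cone w (bd x) := by
  induction x using Finsupp.induction_linear with
  | zero => simp
  | add x y hx hy =>
    simp only [map_add, hx, hy]; abel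
  | single f c =>
    rw [single_eq_smul_single, map_smul, map_smul, map_smul, map_smul, bd_cone_single,
      smul_sub]

noncomputable def eps : Ch V 0 →ₗ[ℤ] ℤ := Finsupp.linearCombination ℤ fun _ => (1 : ℤ)

lemma eps_bdT (f : Tup V 1) : eps (bdT f) = 0 := by
  rw [bdT]
  simp [eps, Fin.sum_univ_two]

lemma bd_cone₀ (w : V) (x : Ch V 0) :
    bd (cone w x) = x - eps x • Finsupp.single (fun _ => w) 1 := by
  induction x using Finsupp.induction_linear with
  | zero => simp
  | add x y hx hy =>
    simp only [map_add, hx, hy, add_smul]; abel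
  | single f c =>
    have base : bd (cone w (Finsupp.single f 1))
        = Finsupp.single f 1 - eps (Finsupp.single f 1) • Finsupp.single (fun _ => w) 1 := by
      rw [cone_single, bd_single, bdT, Fin.sum_univ_two]
      have h0 : (Fin.cons w f : Tup V 1) ∘ (0 : Fin 2).succAbove = f := by
        funext k; simp
      have h1 : (Fin.cons w f : Tup V 1) ∘ (1 : Fin 2).succAbove = (fun _ => w) := by
        funext k
        have : k = 0 := Subsingleton.elim k 0
        subst this
        have : (1 : Fin 2).succAbove 0 = 0 := rfl
        rw [Function.comp_apply, this, Fin.cons_zero]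
      rw [h0, h1]
      have heps : eps (Finsupp.single f (1:ℤ)) = 1 := by simp [eps]
      rw [heps]
      simp only [Fin.val_zero, pow_zero, one_smul, Fin.val_one, pow_one, neg_smul, one_smul]
      abel
    rw [single_eq_smul_single, map_smul, map_smul, map_smul, base]
    simp [smul_sub, smul_smul, smul_eq_mul]

lemma bd_bd : ∀ (n : ℕ) (x : Ch V (n + 2)), bd (bd x) = 0 := by
  intro n
  induction n with
  | zero =>
    intro x
    induction x using Finsupp.induction_linear with
    | zero => simp
    | add x y hx hy => simp [map_add, hx, hy]
    | single f c =>
      rw [single_eq_smul_single, map_smul, map_smul, smul_eq_zero]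
      right
      have hf : Finsupp.single f (1:ℤ) = cone (f 0) (Finsupp.single (Fin.tail f) 1) := by
        rw [cone_single, Fin.cons_self_tail]
      rw [hf, bd_cone, map_sub, bd_cone₀, bd_single, eps_bdT]
      simp
  | succ n ih =>
    intro x
    induction x using Finsupp.induction_linear with
    | zero => simp
    | add x y hx hy => simp [map_add, hx, hy]
    | single f c =>
      rw [single_eq_smul_single, map_smul, map_smul, smul_eq_zero]
      right
      have hf : Finsupp.single f (1:ℤ) = cone (f 0) (Finsupp.single (Fin.tail f) 1) := by
        rw [cone_single, Fin.cons_self_tail]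
      rw [hf, bd_cone, map_sub, bd_cone, ih]
      simp

section Sorted

variable [LinearOrder V]

open Equiv Equiv.Perm

lemma strictMono_range_eq {m : ℕ} {g h : Fin m → V} (hg : StrictMono g) (hh : StrictMono h)
    (hr : Set.range g = Set.range h) : g = h := by
  classical
  set s : Finset V := Finset.univ.image g with hs
  have hcard : s.card = m := by
    rw [hs, Finset.card_image_of_injective _ hg.injective, Finset.card_univ, Fintype.card_fin]
  have hgmem : ∀ x, g x ∈ s := fun x => Finset.mem_image_of_mem _ (Finset.mem_univ x)
  have hhmem : ∀ x, h x ∈ s := by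
    intro x
    have hx : h x ∈ Set.range g := hr ▸ Set.mem_range_self x
    obtain ⟨y, hy⟩ := hx
    exact hy ▸ hgmem y
  rw [Finset.orderEmbOfFin_unique hcard hgmem hg,
    Finset.orderEmbOfFin_unique hcard hhmem hh]

lemma signB {n : ℕ} (σ : Equiv.Perm (Fin (n + 2))) (τ : Equiv.Perm (Fin (n + 1)))
    (i j : Fin (n + 2)) (hcomm : ∀ k, σ (i.succAbove k) = j.succAbove (τ k)) :
    ((Equiv.Perm.sign σ : ℤ)) = (-1) ^ ((i : ℕ) + (j : ℕ)) * (Equiv.Perm.sign τ : ℤ) := by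
  have hij : σ i = j := by
    by_contra hne
    obtain ⟨k, hk⟩ := Fin.exists_succAbove_eq hne
    have h1 := hcomm (τ.symm k)
    rw [Equiv.apply_symm_apply] at h1
    have h2 : i.succAbove (τ.symm k) = i := σ.injective (by rw [h1, hk])
    exact Fin.succAbove_ne i (τ.symm k) h2
  have hρ : (Fin.cycleRange j) * σ * (Fin.cycleRange i)⁻¹
      = Equiv.Perm.decomposeFin.symm (0, τ) := by
    ext x
    induction x using Fin.cases with
    | zero =>
      have hz : (Fin.cycleRange i)⁻¹ (0 : Fin (n + 2)) = i := Fin.cycleRange_symm_zero i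
      simp only [Equiv.Perm.mul_apply, hz, hij, Fin.cycleRange_self,
        Equiv.Perm.decomposeFin_symm_apply_zero]
    | succ k =>
      have hz : (Fin.cycleRange i)⁻¹ k.succ = i.succAbove k := Fin.cycleRange_symm_succ i k
      simp only [Equiv.Perm.mul_apply, hz, hcomm k, Fin.cycleRange_succAbove,
        Equiv.Perm.decomposeFin_symm_apply_succ, Equiv.swap_self, Equiv.refl_apply]
  have hinv : ∀ u : ℤˣ, u⁻¹ = u := by decide
  have hs := congrArg Equiv.Perm.sign hρ
  rw [map_mul, map_mul, map_inv, Fin.sign_cycleRange, Fin.sign_cycleRange,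
    Equiv.Perm.decomposeFin.symm_sign, if_pos rfl, one_mul, hinv] at hs
  -- hs : (-1)^j * sign σ * (-1)^i = sign τ
  have hs2 := congrArg (fun u : ℤˣ => (u : ℤ)) hs
  simp only [Units.val_mul, Units.val_pow_eq_pow_val, Units.val_neg, Units.val_one] at hs2
  -- hs2 : (-1)^j * sign σ * (-1)^i = sign τ  in ℤ
  have hA2 : ((-1 : ℤ) ^ (i : ℕ)) * ((-1 : ℤ) ^ (i : ℕ)) = 1 := by
    rw [← pow_add, (show (i : ℕ) + (i : ℕ) = 2 * (i : ℕ) by ring), pow_mul]; norm_num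
  have hB2 : ((-1 : ℤ) ^ (j : ℕ)) * ((-1 : ℤ) ^ (j : ℕ)) = 1 := by
    rw [← pow_add, (show (j : ℕ) + (j : ℕ) = 2 * (j : ℕ) by ring), pow_mul]; norm_num
  rw [pow_add]
  calc (Equiv.Perm.sign σ : ℤ)
      = ((-1) ^ (i : ℕ) * (-1) ^ (i : ℕ)) * (((-1) ^ (j : ℕ) * (-1) ^ (j : ℕ))
          * (Equiv.Perm.sign σ : ℤ)) := by rw [hA2, hB2]; ring
    _ = (-1) ^ (i : ℕ) * (-1) ^ (j : ℕ)
          * ((-1) ^ (j : ℕ) * (Equiv.Perm.sign σ : ℤ) * (-1) ^ (i : ℕ)) := by ring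
    _ = (-1) ^ (i : ℕ) * (-1) ^ (j : ℕ) * (Equiv.Perm.sign τ : ℤ) := by rw [hs2]

open scoped Classical in
noncomputable def sT {n : ℕ} (f : Tup V n) : Ch V n :=
  if Function.Injective f then
    ((Equiv.Perm.sign (Tuple.sort f) : ℤ)) • Finsupp.single (f ∘ Tuple.sort f) 1
  else 0

noncomputable def sM {n : ℕ} : Ch V n →ₗ[ℤ] Ch V n := Finsupp.linearCombination ℤ sT

@[simp] lemma sM_single {n : ℕ} (f : Tup V n) : sM (Finsupp.single f 1) = sT f := by
  simp [sM]

open scoped Classical in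
lemma sT_eq_of_injective {n : ℕ} {f : Tup V n} (hf : Function.Injective f) :
    sT f = ((Equiv.Perm.sign (Tuple.sort f) : ℤ)) • Finsupp.single (f ∘ Tuple.sort f) 1 := by
  simp [sT, hf]

open scoped Classical in
lemma sT_eq_zero {n : ℕ} {f : Tup V n} (hf : ¬ Function.Injective f) : sT f = 0 := by
  simp [sT, hf]

lemma sM_id₀ (x : Ch V 0) : sM x = x := by
  induction x using Finsupp.induction_linear with
  | zero => simp
  | add x y hx hy => simp [map_add, hx, hy]
  | single f c =>
    rw [single_eq_smul_single, map_smul, sM_single]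
    haveI : Subsingleton (Fin (0 + 1)) := by
      constructor; intro a b; omega
    have hinj : Function.Injective f := Function.injective_of_subsingleton f
    rw [sT_eq_of_injective hinj]
    have hsort : Tuple.sort f = 1 := Subsingleton.elim _ _
    rw [hsort]
    simp

lemma strictMono_sorted {n : ℕ} {f : Tup V n} (hf : Function.Injective f) :
    StrictMono (f ∘ Tuple.sort f) :=
  (Tuple.monotone_sort f).strictMono_of_injective (hf.comp (Tuple.sort f).injective)

lemma sorted_face_eq {n : ℕ} {f : Tup V (n + 1)} (hf : Function.Injective f) (i : Fin (n + 2)) :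
    (f ∘ Tuple.sort f) ∘ i.succAbove
      = (f ∘ (Tuple.sort f i).succAbove) ∘ Tuple.sort (f ∘ (Tuple.sort f i).succAbove) := by
  set σ := Tuple.sort f with hσ
  set j := σ i with hj
  have hinjj : Function.Injective (f ∘ j.succAbove) :=
    hf.comp Fin.succAbove_right_injective
  apply strictMono_range_eq
  · exact (strictMono_sorted hf).comp (Fin.strictMono_succAbove i)
  · exact strictMono_sorted hinjj
  · have hL : Set.range ((f ∘ ⇑σ) ∘ i.succAbove) = f '' ({j}ᶜ) := by
      rw [Set.range_comp, Fin.range_succAbove, Set.image_comp,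
        Set.image_compl_eq σ.bijective, Set.image_singleton]
    have hR : Set.range ((f ∘ j.succAbove) ∘ ⇑(Tuple.sort (f ∘ j.succAbove)))
        = f '' ({j}ᶜ) := by
      rw [Set.range_comp, Equiv.range_eq_univ, Set.image_univ, Set.range_comp,
        Fin.range_succAbove]
    rw [hL, hR]

lemma sort_face_sign {n : ℕ} {f : Tup V (n + 1)} (hf : Function.Injective f) (i : Fin (n + 2)) :
    ((Equiv.Perm.sign (Tuple.sort f) : ℤ))
      = (-1) ^ ((i : ℕ) + ((Tuple.sort f i : ℕ)))
        * (Equiv.Perm.sign (Tuple.sort (f ∘ (Tuple.sort f i).succAbove)) : ℤ) := by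
  set σ := Tuple.sort f with hσ
  set j := σ i with hj
  set τ := Tuple.sort (f ∘ j.succAbove) with hτ
  have hfe : ∀ k, σ (i.succAbove k) = j.succAbove (τ k) := by
    intro k
    have h1 := congrFun (sorted_face_eq hf i) k
    exact hf h1
  exact signB σ τ i j hfe

lemma neg_one_pow_cancel (a b : ℕ) : ((-1 : ℤ) ^ (a + b)) * ((-1 : ℤ) ^ a) = (-1 : ℤ) ^ b := by
  rw [← pow_add, (show a + b + a = 2 * a + b by ring), pow_add, pow_mul]
  norm_num

lemma bd_sT_injective {n : ℕ} {f : Tup V (n + 1)} (hf : Function.Injective f) :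
    bd (sT f) = sM (bdT f) := by
  have hrhs : sM (bdT f)
      = ∑ j : Fin (n + 2), ((-1 : ℤ) ^ (j : ℕ)) • sT (f ∘ j.succAbove) := by
    rw [bdT, map_sum]
    refine Finset.sum_congr rfl fun j _ => ?_
    rw [map_smul, sM_single]
  rw [hrhs, ← Equiv.sum_comp (Tuple.sort f)
    (fun j => ((-1 : ℤ) ^ (j : ℕ)) • sT (f ∘ j.succAbove))]
  rw [sT_eq_of_injective hf, map_smul, bd_single, bdT, Finset.smul_sum]
  refine Finset.sum_congr rfl fun i _ => ?_
  have hinjj : Function.Injective (f ∘ (Tuple.sort f i).succAbove) :=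
    hf.comp Fin.succAbove_right_injective
  rw [sT_eq_of_injective hinjj, ← sorted_face_eq hf i]
  rw [smul_smul, smul_smul]
  congr 1
  rw [sort_face_sign hf i]
  have := neg_one_pow_cancel (i : ℕ) ((Tuple.sort f i : ℕ))
  -- goal: sgnσ * (-1)^i = (-1)^(σ i) * sgnτ  after substitution
  rw [add_comm ((i : ℕ))] at *
  linear_combination
    (Equiv.Perm.sign (Tuple.sort (f ∘ (Tuple.sort f i).succAbove)) : ℤ) * this

lemma collision_resolve {n : ℕ} {f : Tup V (n + 1)} {b : Fin (n + 2)}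
    (h : Function.Injective (f ∘ b.succAbove)) :
    ∀ u v : Fin (n + 2), u ≠ b → v ≠ b → f u = f v → u = v := by
  intro u v hu hv huv
  obtain ⟨u', rfl⟩ := Fin.exists_succAbove_eq hu
  obtain ⟨v', rfl⟩ := Fin.exists_succAbove_eq hv
  exact congrArg b.succAbove (h huv)

lemma inj_face_symm {n : ℕ} {f : Tup V (n + 1)} {a b : Fin (n + 2)} (hab : a ≠ b)
    (hf : f a = f b) (h : Function.Injective (f ∘ b.succAbove)) :
    Function.Injective (f ∘ a.succAbove) := by
  intro x y hxy
  apply Fin.succAbove_right_injective (p := a)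
  have hua : a.succAbove x ≠ a := Fin.succAbove_ne a x
  have hva : a.succAbove y ≠ a := Fin.succAbove_ne a y
  by_cases hub : a.succAbove x = b
  · by_cases hvb : a.succAbove y = b
    · rw [hub, hvb]
    · have hya : a.succAbove y = a := by
        refine collision_resolve h _ _ hvb hab ?_
        calc f (a.succAbove y) = f (a.succAbove x) := hxy.symm
          _ = f b := by rw [hub]
          _ = f a := hf.symm
      exact absurd hya hva
  · by_cases hvb : a.succAbove y = b
    · have hxa : a.succAbove x = a := by
        refine collision_resolve h _ _ hub hab ?_
        calc f (a.succAbove x) = f (a.succAbove y) := hxy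
          _ = f b := by rw [hvb]
          _ = f a := hf.symm
      exact absurd hxa hua
    · exact collision_resolve h _ _ hub hvb hxy

lemma image_compl_singleton_of_dup {n : ℕ} {f : Tup V (n + 1)} {u v : Fin (n + 2)}
    (huv : u ≠ v) (h : f u = f v) : f '' ({u}ᶜ) = Set.range f := by
  apply Set.Subset.antisymm (Set.image_subset_range f _)
  rintro x ⟨k, rfl⟩
  by_cases hk : k = u
  · exact ⟨v, by simp [Ne.symm huv], by rw [← h, hk]⟩
  · exact ⟨k, hk, rfl⟩

lemma bd_sT_noninjective {n : ℕ} {f : Tup V (n + 1)} (hf : ¬ Function.Injective f) :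
    sM (bdT f) = 0 := by
  classical
  rw [bdT, map_sum]
  simp only [map_smul, sM_single]
  obtain ⟨a, b, hfab, hab⟩ : ∃ a b, f a = f b ∧ a ≠ b := by
    rw [Function.not_injective_iff] at hf
    exact hf
  by_cases hb : Function.Injective (f ∘ b.succAbove)
  · have ha : Function.Injective (f ∘ a.succAbove) := inj_face_symm hab hfab hb
    have hother : ∀ j : Fin (n + 2), j ≠ a → j ≠ b → ¬ Function.Injective (f ∘ j.succAbove) := by
      intro j hja hjb hj
      obtain ⟨a', ha'⟩ := Fin.exists_succAbove_eq (Ne.symm hja)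
      obtain ⟨b', hb'⟩ := Fin.exists_succAbove_eq (Ne.symm hjb)
      have : a' = b' := hj (show f (j.succAbove a') = f (j.succAbove b') by
        rw [ha', hb']; exact hfab)
      apply hab
      rw [← ha', ← hb', this]
    rw [← Finset.sum_subset (Finset.subset_univ ({a, b} : Finset (Fin (n + 2))))]
    · rw [Finset.sum_pair hab]
      set τa := Tuple.sort (f ∘ a.succAbove) with hτa
      set τb := Tuple.sort (f ∘ b.succAbove) with hτb
      rw [sT_eq_of_injective ha, sT_eq_of_injective hb]
      have htup : (f ∘ a.succAbove) ∘ τa = (f ∘ b.succAbove) ∘ τb := by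
        apply strictMono_range_eq (strictMono_sorted ha) (strictMono_sorted hb)
        have r1 : Set.range ((f ∘ a.succAbove) ∘ ⇑τa) = Set.range f := by
          rw [Set.range_comp, Equiv.range_eq_univ, Set.image_univ, Set.range_comp,
            Fin.range_succAbove]
          exact image_compl_singleton_of_dup hab hfab
        have r2 : Set.range ((f ∘ b.succAbove) ∘ ⇑τb) = Set.range f := by
          rw [Set.range_comp, Equiv.range_eq_univ, Set.image_univ, Set.range_comp,
            Fin.range_succAbove]
          exact image_compl_singleton_of_dup (Ne.symm hab) hfab.symm
        rw [r1, r2]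
      -- construct χ
      have hmiss : ∀ k : Fin (n + 1), Equiv.swap a b (a.succAbove k) ≠ b := by
        intro k hk
        have h2 : a.succAbove k = a := by
          have := congrArg (Equiv.swap a b) hk
          rwa [Equiv.swap_apply_self, Equiv.swap_apply_right] at this
        exact Fin.succAbove_ne a k h2
      choose χ0 hχ0 using fun k => Fin.exists_succAbove_eq (hmiss k)
      have hχ0inj : Function.Injective χ0 := by
        intro x y hxy
        have h2 : Equiv.swap a b (a.succAbove x) = Equiv.swap a b (a.succAbove y) := by
          rw [← hχ0, ← hχ0, hxy]
        exact Fin.succAbove_right_injective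
          ((Equiv.swap a b).injective h2)
      let χ : Equiv.Perm (Fin (n + 1)) :=
        Equiv.ofBijective χ0 (Finite.injective_iff_bijective.mp hχ0inj)
      have hχ : ∀ k, b.succAbove (χ k) = Equiv.swap a b (a.succAbove k) := hχ0
      have hsign := signB (Equiv.swap a b) χ a b (fun k => (hχ k).symm)
      rw [Equiv.Perm.sign_swap hab] at hsign
      have hsign' : (-1 : ℤ) = (-1 : ℤ) ^ ((a:ℕ) + (b:ℕ)) * (Equiv.Perm.sign χ : ℤ) := by
        simpa using hsign
      have hfswap : ∀ k, f (Equiv.swap a b k) = f k := by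
        intro k
        rcases Equiv.swap_apply_def a b k with _
        by_cases hka : k = a
        · rw [hka, Equiv.swap_apply_left]; exact hfab.symm
        · by_cases hkb : k = b
          · rw [hkb, Equiv.swap_apply_right]; exact hfab
          · rw [Equiv.swap_apply_of_ne_of_ne hka hkb]
      have hcomp : (f ∘ b.succAbove) ∘ (χ ∘ τa) = (f ∘ b.succAbove) ∘ τb := by
        have h3 : (f ∘ b.succAbove) ∘ (⇑χ ∘ ⇑τa) = (f ∘ a.succAbove) ∘ ⇑τa := by
          funext k
          simp only [Function.comp_apply]
          rw [hχ, hfswap]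
        rw [h3, htup]
      have hperm : (Equiv.Perm.sign τb : ℤ)
          = (Equiv.Perm.sign χ : ℤ) * (Equiv.Perm.sign τa : ℤ) := by
        have h4 : χ * τa = τb := by
          apply Equiv.coe_fn_injective
          funext k
          exact hb (congrFun hcomp k)
        rw [← h4, map_mul]
        simp [Units.val_mul]
      rw [htup]
      rw [smul_smul, smul_smul, ← add_smul]
      convert zero_smul ℤ _
      -- coefficient: (-1)^a * sgn τa + (-1)^b * sgn τb = 0
      have hA2 : ((-1 : ℤ) ^ ((a:ℕ) + (b:ℕ))) * ((-1 : ℤ) ^ ((a:ℕ))) = (-1 : ℤ) ^ ((b:ℕ)) :=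
        neg_one_pow_cancel _ _
      linear_combination ((-1:ℤ) ^ ((b:ℕ))) * hperm
        - ((-1:ℤ) ^ ((a:ℕ)) * (Equiv.Perm.sign τa : ℤ)) * hsign'
        - ((Equiv.Perm.sign χ : ℤ) * (Equiv.Perm.sign τa : ℤ)) * hA2
    · intro j hj hjnot
      have hj1 : j ≠ a := by intro h'; exact hjnot (by simp [h'])
      have hj2 : j ≠ b := by intro h'; exact hjnot (by simp [h'])
      rw [sT_eq_zero (hother j hj1 hj2), smul_zero]
  · have ha : ¬ Function.Injective (f ∘ a.succAbove) := by
      intro ha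
      exact hb (inj_face_symm (Ne.symm hab) hfab.symm ha)
    have hall : ∀ j : Fin (n + 2), ¬ Function.Injective (f ∘ j.succAbove) := by
      intro j hj
      by_cases hja : j = a
      · exact ha (hja ▸ hj)
      · by_cases hjb : j = b
        · exact hb (hjb ▸ hj)
        · obtain ⟨a', ha'⟩ := Fin.exists_succAbove_eq (show a ≠ j from fun h => hja h.symm)
          obtain ⟨b', hb'⟩ := Fin.exists_succAbove_eq (show b ≠ j from fun h => hjb h.symm)
          have : a' = b' := hj (show f (j.succAbove a') = f (j.succAbove b') by
            rw [ha', hb']; exact hfab)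
          apply hab
          rw [← ha', ← hb', this]
    refine Finset.sum_eq_zero fun j _ => ?_
    rw [sT_eq_zero (hall j), smul_zero]

lemma sM_bd {n : ℕ} (x : Ch V (n + 1)) : bd (sM x) = sM (bd x) := by
  induction x using Finsupp.induction_linear with
  | zero => simp
  | add x y hx hy => simp [map_add, hx, hy]
  | single f c =>
    rw [single_eq_smul_single, map_smul, map_smul, map_smul, map_smul, sM_single, bd_single]
    by_cases hf : Function.Injective f
    · rw [bd_sT_injective hf]
    · rw [sT_eq_zero hf, bd_sT_noninjective hf, map_zero]

noncomputable def hM : (n : ℕ) → (Ch V n →ₗ[ℤ] Ch V (n + 1))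
  | 0 => 0
  | (n + 1) =>
    Finsupp.linearCombination ℤ fun f : Tup V (n + 1) =>
      cone (f 0) (sT f - Finsupp.single f 1 - hM n (bdT f))

@[simp] lemma hM_zero (x : Ch V 0) : hM 0 x = 0 := rfl

lemma hM_single {n : ℕ} (f : Tup V (n + 1)) :
    hM (n + 1) (Finsupp.single f 1)
      = cone (f 0) (sT f - Finsupp.single f 1 - hM n (bdT f)) := by
  rw [hM]
  simp

lemma bd_hM_single₀ (f : Tup V 1) :
    bd (hM 1 (Finsupp.single f 1)) + hM 0 (bd (Finsupp.single f 1))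
      = sM (Finsupp.single f 1) - Finsupp.single f 1 := by
  rw [hM_single]
  simp only [hM_zero]
  rw [add_zero, sM_single, sub_zero, bd_cone]
  have hz : bd (sT f - Finsupp.single f 1) = 0 := by
    rw [map_sub, bd_single]
    have h1 : bd (sT f) = sM (bdT f) := by
      have h2 := sM_bd (Finsupp.single f 1)
      rwa [sM_single, bd_single] at h2
    rw [h1, sM_id₀, sub_self]
  rw [hz, map_zero, sub_zero]

lemma bd_hM_single₁ {n : ℕ}
    (ih : ∀ x : Ch V (n + 1), bd (hM (n + 1) x) + hM n (bd x) = sM x - x)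
    (f : Tup V (n + 2)) :
    bd (hM (n + 2) (Finsupp.single f 1)) + hM (n + 1) (bd (Finsupp.single f 1))
      = sM (Finsupp.single f 1) - Finsupp.single f 1 := by
  rw [hM_single, bd_cone]
  have hz : bd (sT f - Finsupp.single f 1 - hM (n + 1) (bdT f)) = 0 := by
    rw [map_sub, map_sub, bd_single]
    have h1 : bd (sT f) = sM (bdT f) := by
      have h2 := sM_bd (Finsupp.single f 1)
      rwa [sM_single, bd_single] at h2
    have h2 : bd (hM (n + 1) (bdT f))
        = (sM (bdT f) - bdT f) - hM n (bd (bdT f)) := eq_sub_of_add_eq (ih (bdT f))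
    have h3 : bd (bdT f) = 0 := by
      have h4 := bd_bd n (Finsupp.single f 1)
      rwa [bd_single] at h4
    rw [h1, h2, h3, map_zero, sub_zero]
    abel
  rw [hz, map_zero, sub_zero, bd_single, sM_single]
  abel

lemma bd_hM : ∀ (n : ℕ) (x : Ch V (n + 1)),
    bd (hM (n + 1) x) + hM n (bd x) = sM x - x := by
  intro n
  induction n with
  | zero =>
    intro x
    induction x using Finsupp.induction_linear with
    | zero => simp
    | add x y hx hy =>
      simp only [map_add]
      calc bd (hM 1 x) + bd (hM 1 y) + (hM 0 (bd x) + hM 0 (bd y))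
          = (bd (hM 1 x) + hM 0 (bd x)) + (bd (hM 1 y) + hM 0 (bd y)) := by abel
        _ = (sM x - x) + (sM y - y) := by rw [hx, hy]
        _ = sM x + sM y - (x + y) := by abel
    | single f c =>
      rw [single_eq_smul_single]
      simp only [map_smul]
      rw [← smul_add, ← smul_sub]
      congr 1
      exact bd_hM_single₀ f
  | succ n ih =>
    intro x
    induction x using Finsupp.induction_linear with
    | zero => simp
    | add x y hx hy =>
      simp only [map_add]
      calc bd (hM (n + 2) x) + bd (hM (n + 2) y) + (hM (n + 1) (bd x) + hM (n + 1) (bd y))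
          = (bd (hM (n + 2) x) + hM (n + 1) (bd x)) + (bd (hM (n + 2) y) + hM (n + 1) (bd y)) := by
            abel
        _ = (sM x - x) + (sM y - y) := by rw [hx, hy]
        _ = sM x + sM y - (x + y) := by abel
    | single f c =>
      rw [single_eq_smul_single]
      simp only [map_smul]
      rw [← smul_add, ← smul_sub]
      congr 1
      exact bd_hM_single₁ ih f

def InW (W : Set V) {n : ℕ} (x : Ch V n) : Prop :=
  ∀ g ∈ x.support, ∀ i, g i ∈ W

omit [LinearOrder V] in
lemma InW_zero {W : Set V} {n : ℕ} : InW W (0 : Ch V n) := by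
  intro g hg
  simp at hg

omit [LinearOrder V] in
lemma InW_single {W : Set V} {n : ℕ} {f : Tup V n} (hf : ∀ i, f i ∈ W) (c : ℤ) :
    InW W (Finsupp.single f c) := by
  intro g hg i
  have := Finsupp.support_single_subset hg
  simp at this
  subst this
  exact hf i

omit [LinearOrder V] in
lemma InW_smul {W : Set V} {n : ℕ} {x : Ch V n} (hx : InW W x) (c : ℤ) :
    InW W (c • x) := by
  intro g hg
  exact hx g (Finsupp.support_smul hg)

omit [LinearOrder V] in
lemma InW_sub {W : Set V} {n : ℕ} {x y : Ch V n} (hx : InW W x) (hy : InW W y) :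
    InW W (x - y) := by
  classical
  intro g hg
  rcases Finset.mem_union.mp (Finsupp.support_sub hg) with h | h
  · exact hx g h
  · exact hy g h

omit [LinearOrder V] in
lemma InW_linear {W : Set V} {n m : ℕ} (F : Tup V n → Ch V m)
    (hF : ∀ f, (∀ i, f i ∈ W) → InW W (F f)) (x : Ch V n) (hx : InW W x) :
    InW W (Finsupp.linearCombination ℤ F x) := by
  classical
  intro g hg
  rw [Finsupp.linearCombination_apply] at hg
  obtain ⟨a, ha, hga⟩ := Finset.mem_biUnion.mp (Finsupp.support_sum hg)
  exact hF a (hx a ha) g (Finsupp.support_smul hga)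

omit [LinearOrder V] in
lemma InW_bdT {W : Set V} {n : ℕ} {f : Tup V (n + 1)} (hf : ∀ i, f i ∈ W) :
    InW W (bdT f) := by
  classical
  intro g hg
  rw [bdT] at hg
  obtain ⟨i, _, hgi⟩ := Finset.mem_biUnion.mp (Finsupp.support_finset_sum hg)
  have := Finsupp.support_single_subset (Finsupp.support_smul hgi)
  simp at this
  subst this
  intro k
  exact hf _

omit [LinearOrder V] in
lemma InW_bd {W : Set V} {n : ℕ} {x : Ch V (n + 1)} (hx : InW W x) : InW W (bd x) :=
  InW_linear bdT (fun f hf => InW_bdT hf) x hx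

omit [LinearOrder V] in
lemma InW_cone {W : Set V} {n : ℕ} {w : V} (hw : w ∈ W) {x : Ch V n} (hx : InW W x) :
    InW W (cone w x) := by
  refine InW_linear _ (fun f hf => ?_) x hx
  intro g hg i
  have := Finsupp.support_single_subset hg
  simp at this
  subst this
  induction i using Fin.cases with
  | zero => simpa using hw
  | succ k => simpa using hf k

lemma InW_sT {W : Set V} {n : ℕ} {f : Tup V n} (hf : ∀ i, f i ∈ W) : InW W (sT f) := by
  classical
  by_cases hinj : Function.Injective f
  · rw [sT_eq_of_injective hinj]
    exact InW_smul (InW_single (fun i => hf _) 1) _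
  · rw [sT_eq_zero hinj]
    exact InW_zero

lemma InW_hM {W : Set V} : ∀ (n : ℕ) {x : Ch V n}, InW W x → InW W (hM n x) := by
  intro n
  induction n with
  | zero => intro x hx; rw [hM_zero]; exact InW_zero
  | succ n ih =>
    intro x hx
    rw [hM]
    refine InW_linear _ (fun f hf => ?_) x hx
    exact InW_cone (hf 0)
      (InW_sub (InW_sub (InW_sT hf) (InW_single hf 1)) (ih (InW_bdT hf)))

section Pairing

variable {G : Type*} [AddCommGroup G]

omit [LinearOrder V] in
lemma pear_eq_zero {n : ℕ} {c : Tup V n → G} {x : Ch V n}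
    (h : ∀ f ∈ x.support, c f = 0) : Finsupp.linearCombination ℤ c x = 0 := by
  rw [Finsupp.linearCombination_apply, Finsupp.sum]
  exact Finset.sum_eq_zero fun f hf => by rw [h f hf, smul_zero]

omit [LinearOrder V] in
lemma pear_bd {n : ℕ} (c : Tup V n → G) (x : Ch V (n + 1)) :
    Finsupp.linearCombination ℤ c (bd x)
      = Finsupp.linearCombination ℤ
          (fun f : Tup V (n + 1) =>
            ∑ i : Fin (n + 2), ((-1 : ℤ) ^ (i : ℕ)) • c (f ∘ i.succAbove)) x := by
  induction x using Finsupp.induction_linear with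
  | zero => simp
  | add x y hx hy => simp [map_add, hx, hy]
  | single f k =>
    rw [single_eq_smul_single, map_smul, map_smul, map_smul, bd_single, bdT, map_sum]
    congr 1
    rw [Finsupp.linearCombination_single, one_smul]
    refine Finset.sum_congr rfl fun i _ => ?_
    rw [map_smul, Finsupp.linearCombination_single, one_smul]

end Pairing

end Sorted

end ChainAux

set_option linter.unusedSectionVars true

/-- if the natural map `H^q(N(α), N(α|_A); G) → Ȟ^q(K, A; G)` is nonzero
for some `q ≥ 0`, then `D(α) ≥ q`. -/
theorem covD_ge_of_nerveToCechNonzero {K : Type*} [MetricSpace K] [CompactSpace K]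
    (A : Set K) (hA : IsClosed A) (G : Type*) [AddCommGroup G]
    (α : Set (Set K)) (hα : IsOpenCover α) (q : ℕ)
    (h : NerveToCechNonzero α A G q) :
    (q : ℕ∞) ≤ covD α := by
  classical
  unfold covD
  refine le_iInf fun β => le_iInf fun hβ => ?_
  obtain ⟨hβcov, hβref⟩ := hβ
  by_contra hcon
  obtain ⟨c, ⟨hcrel, hccoc⟩, hmain⟩ := h
  obtain _ | p := q
  · exact hcon (by simp)
  -- choose the refinement map r
  have hrex : ∀ V : Set K, ∃ U : Set K, V ∈ β → V ⊆ U ∧ U ∈ α := by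
    intro V
    by_cases hV : V ∈ β
    · obtain ⟨U, hU, hVU⟩ := hβref V hV
      exact ⟨U, fun _ => ⟨hVU, hU⟩⟩
    · exact ⟨V, fun hc => absurd hc hV⟩
  choose r hr0 using hrex
  have hr : ∀ V ∈ β, V ⊆ r V ∧ r V ∈ α := fun V hV => hr0 V hV
  refine hmain β hβcov hβref r hr ?_
  set c' : NerveSimplex β (p + 1) → G := fun g => c (simplexMap r hr g) with hc'
  -- basic facts about c'
  have hface_map : ∀ (F : NerveSimplex β (p + 1 + 1)) (i : Fin (p + 1 + 2)),
      simplexMap r hr (face F i) = face (simplexMap r hr F) i := by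
    intro F i
    exact Subtype.ext rfl
  have hc'rel : ∀ F : NerveSimplex β (p + 1), InSubNerve A F → c' F = 0 := by
    intro F hF
    apply hcrel
    obtain ⟨x, hx1, hx2⟩ := hF
    refine ⟨x, ?_, hx2⟩
    exact Set.mem_iInter.2 fun i => (hr _ (F.2.1 i)).1 (Set.mem_iInter.1 hx1 i)
  have hc'cob : ∀ F : NerveSimplex β (p + 1 + 1), cob c' F = 0 := by
    intro F
    have hcc : cob c' F = cob c (simplexMap r hr F) := by
      rw [cob, cob]
      refine Finset.sum_congr rfl fun i _ => ?_
      simp only [hc']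
      rw [hface_map]
    rw [hcc]
    exact hccoc _
  -- no injective simplex of dimension p+1 in the nerve of β
  have hninj : ∀ g : NerveSimplex β (p + 1), ¬ Function.Injective g.1 := by
    intro g hg
    apply hcon
    have hmem : (p + 1) ∈ {n : ℕ | ∃ f : Fin (n + 1) → Set K,
        Function.Injective f ∧ (∀ i, f i ∈ β) ∧ (⋂ i, f i).Nonempty} :=
      ⟨g.1, hg, g.2.1, g.2.2⟩
    unfold ord
    exact le_iSup₂ (f := fun (n : ℕ) (_ : n ∈ {n : ℕ | ∃ f : Fin (n + 1) → Set K,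
      Function.Injective f ∧ (∀ i, f i ∈ β) ∧ (⋂ i, f i).Nonempty}) => (n : ℕ∞))
      (p + 1) hmem
  letI : LinearOrder (Set K) := IsWellOrder.linearOrder WellOrderingRel
  set chat : ChainAux.Tup (Set K) (p + 1) → G := fun f =>
    if hf : IsNerveSimplex β f then c' ⟨f, hf⟩ else 0 with hchat
  set b : NerveSimplex β p → G := fun g =>
    - Finsupp.linearCombination ℤ chat (ChainAux.hM p (Finsupp.single g.1 1)) with hb
  have hrange : ∀ {m m' : ℕ} (g : NerveSimplex β m) (f' : Fin (m' + 1) → Set K),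
      (∀ i, f' i ∈ Set.range g.1) → IsNerveSimplex β f' := by
    intro m m' g f' hf'
    constructor
    · intro i
      obtain ⟨k, hk⟩ := hf' i
      rw [← hk]
      exact g.2.1 k
    · obtain ⟨x, hx⟩ := g.2.2
      refine ⟨x, ?_⟩
      refine Set.mem_iInter.2 fun i => ?_
      obtain ⟨k, hk⟩ := hf' i
      rw [← hk]
      exact Set.mem_iInter.1 hx k
  refine ⟨b, ?_, ?_⟩
  · -- b is a relative cochain
    intro g hg
    simp only [hb, neg_eq_zero]
    apply ChainAux.pear_eq_zero
    intro f' hf'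
    have hW : ChainAux.InW (Set.range g.1) (ChainAux.hM p (Finsupp.single g.1 1)) :=
      ChainAux.InW_hM p (ChainAux.InW_single (fun i => Set.mem_range_self i) 1)
    have hmem : ∀ i, f' i ∈ Set.range g.1 := hW f' hf'
    have hns : IsNerveSimplex β f' := hrange g f' hmem
    simp only [hchat]
    rw [dif_pos hns]
    apply hc'rel
    obtain ⟨x, hx1, hx2⟩ := hg
    show ((⋂ i, f' i) ∩ A).Nonempty
    refine ⟨x, ?_, hx2⟩
    refine Set.mem_iInter.2 fun i => ?_
    obtain ⟨k, hk⟩ := hmem i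
    rw [← hk]
    exact Set.mem_iInter.1 hx1 k
  · -- cob b = c'
    intro g
    have hid := ChainAux.bd_hM p (Finsupp.single g.1 1)
    have happ := congrArg (Finsupp.linearCombination ℤ chat) hid
    rw [map_add, map_sub] at happ
    have hW : ChainAux.InW (Set.range g.1)
        (ChainAux.hM (p + 1) (Finsupp.single g.1 1)) :=
      ChainAux.InW_hM (p + 1) (ChainAux.InW_single (fun i => Set.mem_range_self i) 1)
    have t1 : Finsupp.linearCombination ℤ chat
        (ChainAux.bd (ChainAux.hM (p + 1) (Finsupp.single g.1 1))) = 0 := by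
      rw [ChainAux.pear_bd]
      apply ChainAux.pear_eq_zero
      intro f' hf'
      have hmem : ∀ i, f' i ∈ Set.range g.1 := hW f' hf'
      have hns : IsNerveSimplex β f' := hrange g f' hmem
      have hterm : ∀ i : Fin (p + 3), chat (f' ∘ i.succAbove) = c' (face ⟨f', hns⟩ i) := by
        intro i
        have hnsf : IsNerveSimplex β (f' ∘ i.succAbove) := (face ⟨f', hns⟩ i).2
        simp only [hchat]
        rw [dif_pos hnsf]
        rfl
      calc ∑ i : Fin (p + 3), ((-1 : ℤ) ^ (i : ℕ)) • chat (f' ∘ i.succAbove)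
          = ∑ i : Fin (p + 3), ((-1 : ℤ) ^ (i : ℕ)) • c' (face ⟨f', hns⟩ i) :=
            Finset.sum_congr rfl fun i _ => by rw [hterm i]
        _ = cob c' ⟨f', hns⟩ := rfl
        _ = 0 := hc'cob _
    have t2 : Finsupp.linearCombination ℤ chat
        (ChainAux.sM (Finsupp.single g.1 1)) = 0 := by
      rw [ChainAux.sM_single, ChainAux.sT_eq_zero (hninj g)]
      simp
    have t3 : Finsupp.linearCombination ℤ chat (Finsupp.single g.1 1) = c' g := by
      rw [Finsupp.linearCombination_single, one_smul]
      simp only [hchat]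
      rw [dif_pos g.2]
      rfl
    have t4 : Finsupp.linearCombination ℤ chat
        (ChainAux.hM p (ChainAux.bd (Finsupp.single g.1 1))) = - cob b g := by
      rw [ChainAux.bd_single, ChainAux.bdT, map_sum, map_sum, cob,
        ← Finset.sum_neg_distrib]
      refine Finset.sum_congr rfl fun i _ => ?_
      rw [map_smul, map_smul]
      simp only [hb]
      rw [smul_neg, neg_neg]
      rfl
    rw [t1, t2, t3, t4, zero_add, zero_sub] at happ
    exact neg_injective happ

end MeanDimPaper
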